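/- If α ∈ l⁰(ℤ) is a finitely supported mask with α_ev(z) ≠ 0 for all z on the unit circle, then there exists γ ∈ l¹(ℤ) with γ(z) = 1/α_ev(z) on the unit circle, so that the detail (Id - S_α D_γ)c vanishes on all even indices for every c ∈ l∞(ℤ). -/

import Mathlib

/-- The subdivision operator `(S_α c)_k = ∑_ℓ α_{k-2ℓ} c_ℓ`. -/
noncomputable def subdOp (α : ℤ → ℝ) (c : ℤ → ℝ) : ℤ → ℝ :=
  fun k => ∑' l : ℤ, α (k - 2 * l) * c l

/-- The decimation operator `(D_γ c)_k = ∑_ℓ γ_{k-ℓ} c_{2ℓ}`. -/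
noncomputable def decimOp (γ : ℤ → ℝ) (c : ℤ → ℝ) : ℤ → ℝ :=
  fun k => ∑' l : ℤ, γ (k - l) * c (2 * l)

open Complex Polynomial

noncomputable def cv (f g : ℤ → ℂ) : ℤ → ℂ := fun k => ∑' l : ℤ, f (k - l) * g l

noncomputable def dlt : ℤ → ℂ := fun k => if k = 0 then 1 else 0

/-- the shear equiv (j,l) ↦ (j+l, l) -/
def shear : ℤ × ℤ ≃ ℤ × ℤ where
  toFun p := (p.1 + p.2, p.2)
  invFun p := (p.1 - p.2, p.2)
  left_inv p := by simp
  right_inv p := by simp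

lemma norm_le_tsum_norm {f : ℤ → ℂ} (hf : Summable fun k => ‖f k‖) (j : ℤ) :
    ‖f j‖ ≤ ∑' k, ‖f k‖ :=
  hf.le_tsum j (fun _ _ => norm_nonneg _)

lemma pair_summable {f g : ℤ → ℂ} (hf : Summable fun k => ‖f k‖)
    (hg : Summable fun k => ‖g k‖) :
    Summable (fun p : ℤ × ℤ => ‖f (p.1 - p.2)‖ * ‖g p.2‖) := by
  have h := hf.mul_of_nonneg hg (fun k => norm_nonneg _) (fun k => norm_nonneg _)
  have := (shear.summable_iff
    (f := fun p : ℤ × ℤ => ‖f (p.1 - p.2)‖ * ‖g p.2‖)).mp ?_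
  · exact this
  · convert h using 1
    ext p
    simp [shear]

lemma cv_term_summable {f g : ℤ → ℂ} (hf : Summable fun k => ‖f k‖)
    (hg : Summable fun k => ‖g k‖) (k : ℤ) :
    Summable (fun l => f (k - l) * g l) := by
  apply Summable.of_norm_bounded (g := fun l => (∑' j, ‖f j‖) * ‖g l‖) (hg.mul_left _)
  intro l
  rw [norm_mul]
  exact mul_le_mul_of_nonneg_right (norm_le_tsum_norm hf _) (norm_nonneg _)

lemma cv_summable {f g : ℤ → ℂ} (hf : Summable fun k => ‖f k‖)
    (hg : Summable fun k => ‖g k‖) :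
    Summable (fun k => ‖cv f g k‖) := by
  have hp := pair_summable hf hg
  have h2 : Summable fun k : ℤ => ∑' l : ℤ, ‖f (k - l)‖ * ‖g l‖ :=
    ((summable_prod_of_nonneg (fun p => mul_nonneg (norm_nonneg _) (norm_nonneg _))).mp hp).2
  apply Summable.of_nonneg_of_le (fun k => norm_nonneg _) _ h2
  intro k
  calc ‖cv f g k‖ ≤ ∑' l, ‖f (k - l) * g l‖ := norm_tsum_le_tsum_norm ?_
    _ = ∑' l, ‖f (k - l)‖ * ‖g l‖ := by simp [norm_mul]
  · simp only [norm_mul]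
    exact ((summable_prod_of_nonneg
      (fun p => mul_nonneg (norm_nonneg _) (norm_nonneg _))).mp hp).1 k

lemma cv_comm (f g : ℤ → ℂ) : cv f g = cv g f := by
  funext k
  unfold cv
  rw [← (Equiv.subLeft k).tsum_eq (fun l => f (k - l) * g l)]
  apply tsum_congr
  intro m
  simp [Equiv.subLeft, mul_comm]

lemma cv_dlt (f : ℤ → ℂ) : cv dlt f = f := by
  funext k
  unfold cv
  rw [tsum_eq_single k]
  · simp [dlt]
  · intro l hl
    have : k - l ≠ 0 := by omega
    simp [dlt, this]

lemma dlt_summable : Summable (fun k => ‖dlt k‖) := by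
  apply summable_of_ne_finset_zero (s := {0})
  intro k hk
  simp only [Finset.mem_singleton] at hk
  simp [dlt, hk]

def shear2 : ℤ × ℤ ≃ ℤ × ℤ where
  toFun p := (p.1 + p.2, p.1)
  invFun p := (p.2, p.1 - p.2)
  left_inv p := by simp
  right_inv p := by simp

lemma cv_assoc {f g h : ℤ → ℂ} (hf : Summable fun k => ‖f k‖)
    (hg : Summable fun k => ‖g k‖) (hh : Summable fun k => ‖h k‖) :
    cv (cv f g) h = cv f (cv g h) := by
  funext k
  have hzg : ∀ m, ‖g m‖ ≤ ∑' j, ‖g j‖ := norm_le_tsum_norm hg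
  have hzf : ∀ m, ‖f m‖ ≤ ∑' j, ‖f j‖ := norm_le_tsum_norm hf
  set F : ℤ × ℤ → ℂ := fun p => f (k - p.1 - p.2) * g p.2 * h p.1 with hF
  set G : ℤ × ℤ → ℂ := fun p => f (k - p.1) * (g (p.1 - p.2) * h p.2) with hG
  let e2 : ℤ × ℤ ≃ ℤ × ℤ :=
    ⟨fun p => (p.1, k - p.1 - p.2), fun p => (p.1, k - p.1 - p.2),
      fun p => by simp, fun p => by simp⟩
  have hFs : Summable F := by
    rw [← Equiv.summable_iff e2]
    apply Summable.of_norm_bounded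
      (g := fun p : ℤ × ℤ => ‖h p.1‖ * (‖f p.2‖ * (∑' j, ‖g j‖)))
      (hh.mul_of_nonneg (hf.mul_right _) (fun _ => norm_nonneg _)
        (fun _ => mul_nonneg (norm_nonneg _) (tsum_nonneg fun _ => norm_nonneg _)))
    rintro ⟨l, j⟩
    show ‖F (l, k - l - j)‖ ≤ _
    simp only [hF, F, norm_mul]
    have : k - l - (k - l - j) = j := by ring
    rw [this]
    calc ‖f j‖ * ‖g (k - l - j)‖ * ‖h l‖
        ≤ ‖f j‖ * (∑' j, ‖g j‖) * ‖h l‖ := by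
          exact mul_le_mul_of_nonneg_right
            (mul_le_mul_of_nonneg_left (hzg _) (norm_nonneg _)) (norm_nonneg _)
      _ = ‖h l‖ * (‖f j‖ * (∑' j, ‖g j‖)) := by ring
  have hGs : Summable G := by
    apply Summable.of_norm_bounded
      (g := fun p : ℤ × ℤ => (∑' j, ‖f j‖) * (‖g (p.1 - p.2)‖ * ‖h p.2‖))
      (((pair_summable hg hh)).mul_left _)
    rintro ⟨l, m⟩
    simp only [hG, norm_mul]
    rw [← mul_assoc]
    have h1 : (0:ℝ) ≤ ‖g (l - m)‖ * ‖h m‖ := mul_nonneg (norm_nonneg _) (norm_nonneg _)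
    calc ‖f (k - l)‖ * ‖g (l - m)‖ * ‖h m‖ = ‖f (k - l)‖ * (‖g (l - m)‖ * ‖h m‖) := by ring
      _ ≤ (∑' j, ‖f j‖) * (‖g (l - m)‖ * ‖h m‖) := mul_le_mul_of_nonneg_right (hzf _) h1
  have hL : cv (cv f g) h k = ∑' p : ℤ × ℤ, F p := by
    rw [hFs.tsum_prod]
    unfold cv
    apply tsum_congr; intro l
    rw [← tsum_mul_right]
  have hR : cv f (cv g h) k = ∑' p : ℤ × ℤ, G p := by
    rw [hGs.tsum_prod]
    unfold cv
    apply tsum_congr; intro l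
    rw [← tsum_mul_left]
  rw [hL, hR, ← shear2.tsum_eq G]
  apply tsum_congr
  rintro ⟨l, m⟩
  simp only [hF, hG, shear2, Equiv.coe_fn_mk]
  have h1 : k - (l + m) = k - l - m := by ring
  have h2 : l + m - l = m := by ring
  rw [h1, h2, mul_assoc]

lemma cv_symbol {f g : ℤ → ℂ} (hf : Summable fun k => ‖f k‖)
    (hg : Summable fun k => ‖g k‖) {z : ℂ} (hz : ‖z‖ = 1) :
    (∑' k : ℤ, cv f g k * z ^ k) = (∑' k : ℤ, f k * z ^ k) * (∑' k : ℤ, g k * z ^ k) := by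
  have hz0 : z ≠ 0 := by intro h; rw [h] at hz; simp at hz
  have hnz : ∀ k : ℤ, ‖z ^ k‖ = 1 := by intro k; rw [norm_zpow, hz, one_zpow]
  set u : ℤ × ℤ → ℂ := fun p => f (p.1 - p.2) * g p.2 * z ^ p.1 with hu
  have hus : Summable u := by
    apply Summable.of_norm_bounded (pair_summable hf hg)
    rintro ⟨k, l⟩
    simp only [hu, norm_mul, hnz, mul_one]
    exact le_refl _
  set v : ℤ × ℤ → ℂ := fun p => (f p.1 * z ^ p.1) * (g p.2 * z ^ p.2) with hv
  have hvs : Summable v := by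
    apply Summable.of_norm_bounded (g := fun p : ℤ × ℤ => ‖f p.1‖ * ‖g p.2‖)
      (hf.mul_of_nonneg hg (fun _ => norm_nonneg _) (fun _ => norm_nonneg _))
    rintro ⟨k, l⟩
    simp only [hv, norm_mul, hnz, mul_one]
    exact le_refl _
  have h1 : (∑' k : ℤ, cv f g k * z ^ k) = ∑' p : ℤ × ℤ, u p := by
    rw [hus.tsum_prod]
    unfold cv
    apply tsum_congr; intro k
    rw [← tsum_mul_right]
  have h2 : ∑' p : ℤ × ℤ, u p = ∑' p : ℤ × ℤ, v p := by
    rw [← shear.tsum_eq u]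
    apply tsum_congr
    rintro ⟨j, l⟩
    simp only [hu, hv, shear, Equiv.coe_fn_mk]
    have : j + l - l = j := by ring
    rw [this, zpow_add₀ hz0]
    ring
  rw [h1, h2, hvs.tsum_prod]
  calc ∑' (b : ℤ) (c : ℤ), v (b, c)
      = ∑' (b : ℤ), (f b * z ^ b) * ∑' (c : ℤ), (g c * z ^ c) :=
        tsum_congr fun b => by simp only [hv]; exact tsum_mul_left
    _ = _ := tsum_mul_right

/-- finitely supported sequence attached to a polynomial -/
noncomputable def T (p : ℂ[X]) : ℤ → ℂ := fun k => if 0 ≤ k then p.coeff k.toNat else 0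

noncomputable def efac (r : ℂ) : ℤ → ℂ := fun k => if k = 1 then 1 else if k = 0 then -r else 0

lemma T_summable (p : ℂ[X]) : Summable (fun k => ‖T p k‖) := by
  apply summable_of_ne_finset_zero (s := (Finset.range (p.natDegree + 1)).image (fun n : ℕ => (n : ℤ)))
  intro k hk
  simp only [Finset.mem_image, Finset.mem_range] at hk
  have : T p k = 0 := by
    unfold T
    split_ifs with h
    · rw [Polynomial.coeff_eq_zero_of_natDegree_lt]
      by_contra hd
      push_neg at hd
      exact hk ⟨k.toNat, by omega, Int.toNat_of_nonneg h⟩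
    · rfl
  simp [this]

lemma efac_summable (r : ℂ) : Summable (fun k => ‖efac r k‖) := by
  apply summable_of_ne_finset_zero (s := ({0, 1} : Finset ℤ))
  intro k hk
  simp only [Finset.mem_insert, Finset.mem_singleton] at hk
  push_neg at hk
  simp [efac, hk.1, hk.2]

lemma cv_efac (r : ℂ) (f : ℤ → ℂ) (k : ℤ) : cv (efac r) f k = f (k - 1) - r * f k := by
  unfold cv
  rw [tsum_eq_sum (s := ({k - 1, k} : Finset ℤ))]
  · rw [Finset.sum_insert (by simp only [Finset.mem_singleton]; omega), Finset.sum_singleton]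
    have h1 : k - (k - 1) = 1 := by ring
    have h2 : k - k = 0 := by ring
    simp [efac, h1, h2]
    ring
  · intro l hl
    simp only [Finset.mem_insert, Finset.mem_singleton] at hl
    push_neg at hl
    have h1 : k - l ≠ 1 := by omega
    have h2 : k - l ≠ 0 := by omega
    simp [efac, h1, h2]

lemma T_factor_mul (r : ℂ) (p : ℂ[X]) : T ((X - C r) * p) = cv (efac r) (T p) := by
  funext k
  rw [cv_efac]
  have hc : ∀ n : ℕ, ((X - C r) * p).coeff n = (X * p).coeff n - r * p.coeff n := by
    intro n
    rw [sub_mul, Polynomial.coeff_sub, Polynomial.coeff_C_mul]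
  unfold T
  rcases lt_trichotomy k 0 with hk | hk | hk
  · have h1 : ¬ (0 ≤ k) := by omega
    have h2 : ¬ (0 ≤ k - 1) := by omega
    simp [h1, h2]
    intro h; omega
  · subst hk
    have h2 : ¬ ((0:ℤ) ≤ 0 - 1) := by omega
    simp only [le_refl, if_true, h2, if_false, Int.toNat_zero]
    rw [hc 0, Polynomial.mul_coeff_zero]
    simp
  · have h1 : 0 ≤ k := by omega
    have h2 : 0 ≤ k - 1 := by omega
    simp only [h1, if_true, h2, if_true]
    have h3 : k.toNat = (k - 1).toNat + 1 := by omega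
    rw [h3, hc, Polynomial.coeff_X_mul]

lemma efac_inverse {r : ℂ} (hr : ‖r‖ ≠ 1) :
    ∃ g : ℤ → ℂ, Summable (fun k => ‖g k‖) ∧ cv (efac r) g = dlt := by
  rcases lt_or_gt_of_ne hr with hlt | hgt
  · -- ‖r‖ < 1 : g k = r^((-k-1).toNat) for k ≤ -1
    refine ⟨fun k => if k ≤ -1 then r ^ ((-k - 1).toNat) else 0, ?_, ?_⟩
    · rw [← Function.Injective.summable_iff (g := fun n : ℕ => (-1 - n : ℤ))]
      · have heq : ((fun k : ℤ => ‖(fun k : ℤ => if k ≤ -1 then r ^ ((-k - 1).toNat) else 0) k‖) ∘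
            (fun n : ℕ => (-1 - n : ℤ))) = fun n : ℕ => ‖r‖ ^ n := by
          funext n
          simp only [Function.comp_apply]
          have h1 : (-1 - (n:ℤ)) ≤ -1 := by omega
          rw [if_pos h1]
          have h2 : (-(-1 - (n:ℤ)) - 1).toNat = n := by omega
          rw [h2, norm_pow]
        rw [heq]
        exact summable_geometric_of_lt_one (norm_nonneg r) hlt
      · intro a b hab; simpa using hab
      · intro k hk
        have : ¬ k ≤ -1 := by
          intro h
          exact hk ⟨(-k - 1).toNat, by simp; omega⟩
        simp [this]
    · funext k
      rw [cv_efac]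
      unfold dlt
      rcases lt_trichotomy k 0 with hk | hk | hk
      · have h1 : k - 1 ≤ -1 := by omega
        have h2 : k ≤ -1 := by omega
        have h3 : k ≠ 0 := by omega
        rw [if_pos h1, if_pos h2, if_neg h3]
        have h4 : (-(k - 1) - 1).toNat = (-k - 1).toNat + 1 := by omega
        rw [h4, pow_succ]
        ring
      · subst hk
        norm_num
      · have h1 : ¬ (k - 1 ≤ -1) := by omega
        have h2 : ¬ (k ≤ -1) := by omega
        have h3 : k ≠ 0 := by omega
        rw [if_neg h1, if_neg h2, if_neg h3]
        ring
  · -- ‖r‖ > 1 : g k = -(r⁻¹)^((k+1).toNat) for 0 ≤ k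
    have hr0 : r ≠ 0 := by
      intro h
      rw [h, norm_zero] at hgt
      linarith
    refine ⟨fun k => if 0 ≤ k then -(r⁻¹ ^ ((k + 1).toNat)) else 0, ?_, ?_⟩
    · rw [← Function.Injective.summable_iff (g := fun n : ℕ => (n : ℤ))]
      · have hinv : ‖r⁻¹‖ < 1 := by
          rw [norm_inv]
          rw [inv_lt_one_iff₀]
          right; exact hgt
        have heq : ((fun k : ℤ => ‖(fun k : ℤ => if 0 ≤ k then -(r⁻¹ ^ ((k + 1).toNat)) else 0) k‖) ∘
            (fun n : ℕ => (n : ℤ))) = fun n : ℕ => ‖r⁻¹‖ ^ n * ‖r⁻¹‖ := by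
          funext n
          simp only [Function.comp_apply]
          have h1 : (0:ℤ) ≤ (n:ℤ) := by omega
          rw [if_pos h1]
          have h2 : ((n:ℤ) + 1).toNat = n + 1 := by omega
          rw [h2, norm_neg, norm_pow, pow_succ]
        rw [heq]
        exact (summable_geometric_of_lt_one (norm_nonneg _) hinv).mul_right _
      · intro a b hab; simpa using hab
      · intro k hk
        have : ¬ (0 ≤ k) := by
          intro h
          exact hk ⟨k.toNat, by simp; omega⟩
        simp [this]
    · funext k
      rw [cv_efac]
      unfold dlt
      rcases lt_trichotomy k 0 with hk | hk | hk
      · have h1 : ¬ ((0:ℤ) ≤ k - 1) := by omega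
        have h2 : ¬ ((0:ℤ) ≤ k) := by omega
        have h3 : k ≠ 0 := by omega
        rw [if_neg h1, if_neg h2, if_neg h3]
        ring
      · subst hk
        norm_num
        exact mul_inv_cancel₀ hr0
      · have h1 : (0:ℤ) ≤ k - 1 := by omega
        have h2 : (0:ℤ) ≤ k := by omega
        have h3 : k ≠ 0 := by omega
        rw [if_pos h1, if_pos h2, if_neg h3]
        have h4 : (k + 1).toNat = (k - 1 + 1).toNat + 1 := by omega
        rw [h4, pow_succ]
        field_simp
        ring

lemma inv_prod_roots : ∀ (s : Multiset ℂ), (∀ r ∈ s, ‖r‖ ≠ 1) →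
    ∃ g : ℤ → ℂ, Summable (fun k => ‖g k‖) ∧
      cv (T (s.map fun r => X - C r).prod) g = dlt := by
  intro s
  induction s using Multiset.induction with
  | empty =>
    intro _
    refine ⟨dlt, dlt_summable, ?_⟩
    have h1 : ((Multiset.map (fun r => X - C r) 0).prod : ℂ[X]) = 1 := by simp
    have h2 : T 1 = dlt := by
      funext k
      unfold T dlt
      rcases lt_trichotomy k 0 with hk | hk | hk
      · have h1 : ¬ (0 ≤ k) := by omega
        have h3 : k ≠ 0 := by omega
        simp [h1, h3]
      · subst hk; simp
      · have h1 : 0 ≤ k := by omega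
        have h3 : k ≠ 0 := by omega
        have h4 : k.toNat ≠ 0 := by omega
        simp [h1, h3, Polynomial.coeff_one, h4]
    rw [h1, h2, cv_dlt]
  | cons r t ih =>
    intro hs
    obtain ⟨g', hg's, hg'⟩ := ih (fun x hx => hs x (Multiset.mem_cons_of_mem hx))
    obtain ⟨gr, hgrs, hgr⟩ := efac_inverse (hs r (Multiset.mem_cons_self r t))
    set p : ℂ[X] := (Multiset.map (fun r => X - C r) t).prod with hp
    have hprod : ((Multiset.map (fun r => X - C r) (r ::ₘ t)).prod : ℂ[X]) = (X - C r) * p := by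
      rw [Multiset.map_cons, Multiset.prod_cons]
    refine ⟨cv gr g', cv_summable hgrs hg's, ?_⟩
    rw [hprod, T_factor_mul]
    have hTp := T_summable p
    calc cv (cv (efac r) (T p)) (cv gr g')
        = cv (efac r) (cv (T p) (cv gr g')) := cv_assoc (efac_summable r) hTp (cv_summable hgrs hg's)
      _ = cv (efac r) (cv (cv (T p) gr) g') := by rw [cv_assoc hTp hgrs hg's]
      _ = cv (efac r) (cv (cv gr (T p)) g') := by rw [cv_comm (T p) gr]
      _ = cv (efac r) (cv gr (cv (T p) g')) := by rw [cv_assoc hgrs hTp hg's]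
      _ = cv (efac r) (cv gr dlt) := by rw [hg']
      _ = cv (efac r) gr := by rw [cv_comm gr dlt, cv_dlt]
      _ = dlt := hgr

set_option maxHeartbeats 2000000 in
/-- If `α` is finitely supported and its even-part symbol has no zeros on the unit
circle, then there is `γ ∈ l¹(ℤ)` with `γ(z) = 1/α_ev(z)` on the unit circle, and the
detail `(Id - S_α D_γ) c` vanishes at all even indices for every bounded `c`. -/
theorem even_reversible_exists (α : ℤ → ℝ)
    (hfin : (Function.support α).Finite)
    (hne : ∀ z : ℂ, ‖z‖ = 1 → (∑' k : ℤ, (α (2 * k) : ℂ) * z ^ k) ≠ 0) :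
    ∃ γ : ℤ → ℝ, Summable (fun k : ℤ => |γ k|) ∧
      (∀ z : ℂ, ‖z‖ = 1 →
        (∑' k : ℤ, (γ k : ℂ) * z ^ k) = 1 / (∑' k : ℤ, (α (2 * k) : ℂ) * z ^ k)) ∧
      (∀ c : ℤ → ℝ, (∃ M : ℝ, ∀ k : ℤ, |c k| ≤ M) →
        ∀ k : ℤ, c (2 * k) - subdOp α (decimOp γ c) (2 * k) = 0) := by
  classical
  set A : ℤ → ℂ := fun k => ((α (2 * k) : ℝ) : ℂ) with hA
  -- finite support of A
  have hAfin : (Function.support A).Finite := by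
    apply Set.Finite.subset (hfin.preimage (f := fun k : ℤ => 2 * k)
      (Set.injOn_of_injective (fun a b h => by omega)))
    intro k hk
    simp only [Function.mem_support, hA, ne_eq, Complex.ofReal_eq_zero] at hk
    simpa [Set.mem_preimage, Function.mem_support] using hk
  set N : ℕ := hAfin.toFinset.sup (fun k => k.natAbs) with hNdef
  have hbound : ∀ k : ℤ, (k < -(N:ℤ) ∨ (N:ℤ) < k) → A k = 0 := by
    intro k hk
    by_contra h
    have hmem : k ∈ hAfin.toFinset := by
      rw [Set.Finite.mem_toFinset]; exact h
    have h2 : k.natAbs ≤ N := Finset.le_sup (f := fun k : ℤ => k.natAbs) hmem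
    omega
  have hA_sum : Summable (fun k => ‖A k‖) := by
    apply summable_of_ne_finset_zero (s := hAfin.toFinset)
    intro k hk
    rw [Set.Finite.mem_toFinset] at hk
    simp only [Function.mem_support, not_not] at hk
    simp [hk]
  have hzpow1 : ∀ (z : ℂ), ‖z‖ = 1 → ∀ k : ℤ, ‖z ^ k‖ = 1 := by
    intro z hz k; rw [norm_zpow, hz, one_zpow]
  have hAz_sum : ∀ (z : ℂ), ‖z‖ = 1 → Summable (fun k : ℤ => A k * z ^ k) := by
    intro z hz
    apply Summable.of_norm_bounded hA_sum
    intro k; rw [norm_mul, hzpow1 z hz, mul_one]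
  -- the polynomial
  set q : ℂ[X] := ∑ j ∈ Finset.range (2 * N + 1), C (A ((j : ℤ) - N)) * X ^ j with hq
  have hqc : ∀ n : ℕ, q.coeff n = A ((n : ℤ) - N) := by
    intro n
    rw [hq, Polynomial.finset_sum_coeff]
    have hterm : ∀ j : ℕ, (C (A ((j:ℤ) - N)) * X ^ j).coeff n
        = if j = n then A ((j:ℤ) - N) else 0 := by
      intro j
      rw [Polynomial.coeff_C_mul, Polynomial.coeff_X_pow]
      rcases eq_or_ne n j with h | h
      · subst h; simp
      · simp [h, Ne.symm h]
    rw [Finset.sum_congr rfl (fun j _ => hterm j)]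
    rw [Finset.sum_ite_eq' (Finset.range (2 * N + 1)) n (fun j => A ((j:ℤ) - N))]
    split_ifs with h
    · rfl
    · rw [Finset.mem_range] at h
      exact (hbound _ (Or.inr (by omega))).symm
  have hq0 : q ≠ 0 := by
    intro h0
    have hA0 : ∀ k : ℤ, A k = 0 := by
      intro k
      rcases le_or_gt (-(N:ℤ)) k with hk | hk
      · have : q.coeff (k + N).toNat = 0 := by rw [h0]; simp
        rw [hqc] at this
        rwa [show ((k + (N:ℤ)).toNat : ℤ) - N = k from by omega] at this
      · exact hbound k (Or.inl hk)
    apply hne 1 (by norm_num)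
    rw [show (fun k : ℤ => ((α (2 * k) : ℝ) : ℂ) * (1:ℂ) ^ k) = fun k : ℤ => 0 from ?_]
    · exact tsum_zero
    · funext k
      have := hA0 k
      rw [hA] at this
      simp only [this, zero_mul]
  set lc := q.leadingCoeff with hlc
  have hlc0 : lc ≠ 0 := Polynomial.leadingCoeff_ne_zero.mpr hq0
  have hfact : q = C lc * (q.roots.map fun a => X - C a).prod :=
    (Polynomial.C_leadingCoeff_mul_prod_multiset_X_sub_C IsAlgClosed.card_roots_eq_natDegree).symm
  -- evaluation identity
  have hval : ∀ z : ℂ, z ≠ 0 → q.eval z = z ^ (N:ℤ) * ∑' k : ℤ, A k * z ^ k := by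
    intro z hz0
    have h1 : (∑' k : ℤ, A k * z ^ k)
        = ∑ k ∈ Finset.Icc (-(N:ℤ)) (N:ℤ), A k * z ^ k := by
      apply tsum_eq_sum
      intro k hk
      rw [Finset.mem_Icc] at hk
      rw [hbound k (by omega), zero_mul]
    rw [h1, Finset.mul_sum, hq, Polynomial.eval_finset_sum]
    apply Finset.sum_nbij' (i := fun j : ℕ => (j : ℤ) - N) (j := fun k : ℤ => (k + N).toNat)
    · intro j hj
      rw [Finset.mem_range] at hj
      rw [Finset.mem_Icc]
      omega
    · intro k hk
      rw [Finset.mem_Icc] at hk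
      rw [Finset.mem_range]
      omega
    · intro j hj; rw [Finset.mem_range] at hj; omega
    · intro k hk; rw [Finset.mem_Icc] at hk; omega
    · intro j hj
      rw [Finset.mem_range] at hj
      simp only [Polynomial.eval_mul, Polynomial.eval_C, Polynomial.eval_pow, Polynomial.eval_X]
      rw [show z ^ (N:ℤ) * (A ((j:ℤ) - N) * z ^ ((j:ℤ) - N)) =
        A ((j:ℤ) - N) * (z ^ (N:ℤ) * z ^ ((j:ℤ) - N)) from by ring]
      rw [← zpow_add₀ hz0]
      rw [show (N:ℤ) + ((j:ℤ) - N) = (j:ℤ) from by ring, zpow_natCast]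
  -- roots off the circle
  have hroots : ∀ r ∈ q.roots, ‖r‖ ≠ 1 := by
    intro r hr h1
    have hr0 : r ≠ 0 := by
      intro h; rw [h, norm_zero] at h1; norm_num at h1
    have hev : q.eval r = 0 := (Polynomial.mem_roots hq0).mp hr
    rw [hval r hr0] at hev
    rcases mul_eq_zero.mp hev with h | h
    · exact zpow_ne_zero _ hr0 h
    · exact hne r h1 h
  obtain ⟨g, hgs, hg⟩ := inv_prod_roots q.roots hroots
  set prd : ℂ[X] := (q.roots.map fun a => X - C a).prod with hprd
  have hTq : ∀ k : ℤ, T q k = lc * T prd k := by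
    intro k
    unfold T
    split_ifs with h
    · rw [show q.coeff k.toNat = (C lc * prd).coeff k.toNat from by rw [← hfact]]
      rw [Polynomial.coeff_C_mul]
    · rw [mul_zero]
  have hAT : ∀ m : ℤ, A m = T q (m + N) := by
    intro m
    unfold T
    rcases le_or_gt (-(N:ℤ)) m with hm | hm
    · rw [if_pos (by omega), hqc]
      congr 1
      omega
    · rw [if_neg (by omega)]
      exact hbound m (Or.inl hm)
  set γC : ℤ → ℂ := fun l => lc⁻¹ * g (l - N) with hγC
  have hgshift : Summable (fun l : ℤ => ‖g (l - N)‖) :=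
    (Equiv.subRight ((N:ℕ):ℤ)).summable_iff.mpr hgs
  have hγCs : Summable (fun l => ‖γC l‖) := by
    apply Summable.congr (hgshift.mul_left ‖lc⁻¹‖)
    intro l
    rw [hγC, norm_mul]
  have hconv : ∀ n : ℤ, (∑' l : ℤ, A (n - l) * γC l) = dlt n := by
    intro n
    have h1 : ∀ l : ℤ, A (n - l) * γC l = T prd (n - (l - N)) * g (l - N) := by
      intro l
      rw [hAT, hTq, hγC]
      rw [show n - l + N = n - (l - N) from by ring]
      field_simp
    rw [tsum_congr h1]
    have h2 := (Equiv.subRight ((N:ℕ):ℤ)).tsum_eq (fun m => T prd (n - m) * g m)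
    simp only [Equiv.subRight_apply] at h2
    rw [h2]
    exact congrFun hg n
  -- symbol of γC
  have hγCz_sum : ∀ (z : ℂ), ‖z‖ = 1 → Summable (fun k : ℤ => γC k * z ^ k) := by
    intro z hz
    apply Summable.of_norm_bounded hγCs
    intro k; rw [norm_mul, hzpow1 z hz, mul_one]
  have key : ∀ z : ℂ, ‖z‖ = 1 →
      (∑' k : ℤ, γC k * z ^ k) = 1 / (∑' k : ℤ, A k * z ^ k) := by
    intro z hz
    have h1 := cv_symbol hA_sum hγCs hz
    have h2 : cv A γC = dlt := funext hconv
    rw [h2] at h1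
    have h3 : (∑' k : ℤ, dlt k * z ^ k) = 1 := by
      rw [tsum_eq_single 0]
      · simp [dlt]
      · intro k hk; simp [dlt, hk]
    rw [h3] at h1
    rw [eq_div_iff (hne z hz)]
    rw [h1]
    ring
  have conj_tsum : ∀ (f : ℤ → ℂ), Summable f →
      (starRingEnd ℂ) (∑' k : ℤ, f k) = ∑' k : ℤ, (starRingEnd ℂ) (f k) := by
    intro f hf
    exact ((hf.hasSum.map (starRingEnd ℂ) Complex.continuous_conj).tsum_eq).symm
  refine ⟨fun k => (γC k).re, ?_, ?_, ?_⟩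
  · apply Summable.of_nonneg_of_le (fun k => abs_nonneg _) _ hγCs
    intro k
    exact Complex.abs_re_le_norm (γC k)
  · intro z hz
    have hz0 : z ≠ 0 := by intro h; rw [h, norm_zero] at hz; norm_num at hz
    have hconjz : ‖(starRingEnd ℂ) z‖ = 1 := by rwa [RCLike.norm_conj]
    have hΓconj : (∑' k : ℤ, (starRingEnd ℂ) (γC k) * z ^ k)
        = 1 / (∑' k : ℤ, A k * z ^ k) := by
      have h1 := key ((starRingEnd ℂ) z) hconjz
      have h2 := conj_tsum _ (hγCz_sum _ hconjz)
      have h3 : ∀ k : ℤ, (starRingEnd ℂ) (γC k * ((starRingEnd ℂ) z) ^ k)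
          = (starRingEnd ℂ) (γC k) * z ^ k := by
        intro k
        simp only [map_mul, map_zpow₀, Complex.conj_conj]
      rw [tsum_congr h3] at h2
      rw [← h2, h1, map_div₀, map_one]
      congr 1
      rw [conj_tsum _ (hAz_sum _ hconjz)]
      apply tsum_congr
      intro k
      simp only [map_mul, map_zpow₀, Complex.conj_conj, hA, Complex.conj_ofReal]
    have hre : ∀ k : ℤ, (((γC k).re : ℝ) : ℂ) * z ^ k
        = (γC k * z ^ k + (starRingEnd ℂ) (γC k) * z ^ k) / 2 := by
      intro k
      have := Complex.add_conj (γC k)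
      rw [show γC k * z ^ k + (starRingEnd ℂ) (γC k) * z ^ k
        = (γC k + (starRingEnd ℂ) (γC k)) * z ^ k from by ring, this]
      push_cast
      ring
    rw [tsum_congr hre]
    have hsum1 := hγCz_sum z hz
    have hsum2 : Summable (fun k : ℤ => (starRingEnd ℂ) (γC k) * z ^ k) := by
      apply Summable.of_norm_bounded hγCs
      intro k
      rw [norm_mul, hzpow1 z hz, mul_one, RCLike.norm_conj]
    rw [tsum_div_const, hsum1.tsum_add hsum2, key z hz, hΓconj]
    ring
  · -- the reproduction property
    intro cs ⟨M, hM⟩ k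
    set γ : ℤ → ℝ := fun k => (γC k).re with hγ
    have hγabs : Summable fun j : ℤ => |γ j| := by
      apply Summable.of_nonneg_of_le (fun k => abs_nonneg _) _ hγCs
      intro j
      exact Complex.abs_re_le_norm (γC j)
    have hS : ∀ n : ℤ, (∑' j : ℤ, α (2 * n - 2 * j) * γ j) = (if n = 0 then 1 else 0) := by
      intro n
      have h1 := Complex.reCLM.map_tsum (cv_term_summable hA_sum hγCs n)
      have h2 : ∀ l : ℤ, Complex.reCLM (A (n - l) * γC l) = α (2 * n - 2 * l) * γ l := by
        intro l
        have harg : (2 * (n - l) : ℤ) = 2 * n - 2 * l := by ring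
        simp only [Complex.reCLM_apply, hA, harg, hγ, Complex.mul_re, Complex.ofReal_re,
          Complex.ofReal_im, zero_mul, sub_zero]
      rw [tsum_congr h2] at h1
      rw [← h1, hconv n]
      rcases eq_or_ne n 0 with h | h
      · simp [dlt, h]
      · simp [dlt, h]
    have hM0 : 0 ≤ M := le_trans (abs_nonneg _) (hM 0)
    have hd : ∀ l : ℤ, Summable (fun m : ℤ => γ (l - m) * cs (2 * m)) := by
      intro l
      apply Summable.of_norm_bounded (g := fun m => |γ (l - m)| * M)
      · apply Summable.mul_right
        exact (Equiv.subLeft l).summable_iff.mpr hγabs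
      · intro m
        rw [Real.norm_eq_abs, abs_mul]
        exact mul_le_mul_of_nonneg_left (hM _) (abs_nonneg _)
    set L : Finset ℤ := hfin.toFinset.image (fun t => (2 * k - t) / 2) with hL
    have hLz : ∀ l : ℤ, l ∉ L → α (2 * k - 2 * l) = 0 := by
      intro l hl
      by_contra h
      apply hl
      rw [hL, Finset.mem_image]
      exact ⟨2 * k - 2 * l, hfin.mem_toFinset.mpr h, by omega⟩
    have step1 : subdOp α (decimOp γ cs) (2 * k)
        = ∑ l ∈ L, α (2 * k - 2 * l) * decimOp γ cs l := by
      apply tsum_eq_sum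
      intro l hl
      rw [hLz l hl, zero_mul]
    have step2 : ∀ l : ℤ, α (2 * k - 2 * l) * decimOp γ cs l
        = ∑' m : ℤ, α (2 * k - 2 * l) * (γ (l - m) * cs (2 * m)) := by
      intro l
      rw [tsum_mul_left]
      rfl
    have step3 : subdOp α (decimOp γ cs) (2 * k)
        = ∑' m : ℤ, ∑ l ∈ L, α (2 * k - 2 * l) * (γ (l - m) * cs (2 * m)) := by
      rw [step1, Finset.sum_congr rfl (fun l _ => step2 l)]
      exact (Summable.tsum_finsetSum (fun l _ => (hd l).mul_left _)).symm
    have step4 : ∀ m : ℤ, (∑ l ∈ L, α (2 * k - 2 * l) * (γ (l - m) * cs (2 * m)))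
        = (if m = k then 1 else 0) * cs (2 * m) := by
      intro m
      rw [Finset.sum_congr rfl (fun l _ => (mul_assoc _ _ _).symm), ← Finset.sum_mul]
      congr 1
      have h1 : (∑ l ∈ L, α (2 * k - 2 * l) * γ (l - m))
          = ∑' l : ℤ, α (2 * k - 2 * l) * γ (l - m) := by
        symm
        apply tsum_eq_sum
        intro l hl
        rw [hLz l hl, zero_mul]
      rw [h1]
      have h2 := (Equiv.addRight m).tsum_eq (fun l : ℤ => α (2 * k - 2 * l) * γ (l - m))
      simp only [Equiv.coe_addRight] at h2
      rw [← h2]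
      rw [tsum_congr (fun j => by
        rw [show 2 * k - 2 * (j + m) = 2 * (k - m) - 2 * j from by ring,
          show j + m - m = j from by ring])]
      rw [hS (k - m)]
      rcases eq_or_ne m k with h | h
      · subst h; simp
      · rw [if_neg (by omega), if_neg h]
    have step5 : subdOp α (decimOp γ cs) (2 * k) = cs (2 * k) := by
      rw [step3, tsum_congr step4, tsum_eq_single k]
      · simp
      · intro m hm
        rw [if_neg hm, zero_mul]
    rw [step5, sub_self]
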